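/- Let f = (f_n)_{n=0}^{31} be an arbitrary family of functions where f_n maps bit-strings of length n to a single bit, let PP_f be the canonical prefix-preserving function, and let s, a, b ∈ {0,1}^32 and c be a natural number. Then Q(PP_f^c(s XOR a), PP_f^c(s XOR b)) = Q(a, b); i.e., the migration map x ↦ PP_f^c(s XOR x) preserves the longest common prefix length of any two addresses to which it is applied with the same prefix string s and the same key index c. -/
import Mathlib


/-- The canonical prefix-preserving anonymization function: bit `i` of the
output is bit `i` of the input XOR-ed with `f i` applied to the first `i`
bits of the input. -/
def PP (f : (n : Fin 32) → (Fin (n : ℕ) → Bool) → Bool)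
    (a : Fin 32 → Bool) : Fin 32 → Bool :=
  fun i => xor (a i) (f i (fun j => a ⟨j.val, j.isLt.trans i.isLt⟩))
/-- The longest-common-prefix length of two 32-bit strings: the largest
`k ≤ 32` such that `a` and `b` agree on their first `k` bits. -/
def Q (a b : Fin 32 → Bool) : ℕ :=
  Nat.findGreatest (fun k => ∀ i : Fin 32, i.val < k → a i = b i) 32

lemma findGreatest_congr (P P' : ℕ → Prop) [DecidablePred P] [DecidablePred P']
    (h : ∀ k, P k ↔ P' k) (n : ℕ) : Nat.findGreatest P n = Nat.findGreatest P' n := by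
  induction n with
  | zero => rfl
  | succ n ih => simp [Nat.findGreatest_succ, h, ih]

lemma agree_iff (f : (n : Fin 32) → (Fin (n : ℕ) → Bool) → Bool)
    (a b : Fin 32 → Bool) (k : ℕ) :
    (∀ i : Fin 32, i.val < k → PP f a i = PP f b i) ↔
      (∀ i : Fin 32, i.val < k → a i = b i) := by
  constructor
  · intro h
    have key : ∀ n, ∀ i : Fin 32, i.val = n → i.val < k → a i = b i := by
      intro n
      induction n using Nat.strong_induction_on with
      | _ n ih =>
        intro i hin hik
        have hp := h i hik
        simp only [PP] at hp
        have hpref : (fun j : Fin i.val => a ⟨j.val, j.isLt.trans i.isLt⟩) =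
            (fun j : Fin i.val => b ⟨j.val, j.isLt.trans i.isLt⟩) := by
          funext j
          exact ih j.val (hin ▸ j.isLt) _ rfl (lt_trans (j.isLt) hik)
        rw [hpref] at hp
        cases h1 : a i <;> cases h2 : b i <;> simp_all
    exact fun i hi => key i.val i rfl hi
  · intro h i hik
    simp only [PP]
    have hpref : (fun j : Fin i.val => a ⟨j.val, j.isLt.trans i.isLt⟩) =
        (fun j : Fin i.val => b ⟨j.val, j.isLt.trans i.isLt⟩) := by
      funext j
      exact h _ (lt_trans j.isLt hik)
    rw [h i hik, hpref]

lemma Q_PP (f : (n : Fin 32) → (Fin (n : ℕ) → Bool) → Bool)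
    (a b : Fin 32 → Bool) : Q (PP f a) (PP f b) = Q a b := by
  exact findGreatest_congr _ _ (fun k => agree_iff f a b k) 32

/-- The migration map `x ↦ PP_f^[c] (s XOR x)` (same prefix string `s`, same
key index `c`) preserves the longest common prefix length of any two
addresses. -/
theorem migration_preserves_Q (f : (n : Fin 32) → (Fin (n : ℕ) → Bool) → Bool)
    (s a b : Fin 32 → Bool) (c : ℕ) :
    Q ((PP f)^[c] (fun i => xor (s i) (a i)))
        ((PP f)^[c] (fun i => xor (s i) (b i))) = Q a b := by
  have hiter : ∀ (x y : Fin 32 → Bool), Q ((PP f)^[c] x) ((PP f)^[c] y) = Q x y := by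
    induction c with
    | zero => intro x y; rfl
    | succ n ih =>
      intro x y
      rw [Function.iterate_succ_apply, Function.iterate_succ_apply, ih, Q_PP]
  rw [hiter]
  apply findGreatest_congr
  intro k
  constructor
  · intro h i hik
    have := h i hik
    cases h1 : a i <;> cases h2 : b i <;> simp_all
  · intro h i hik
    show xor (s i) (a i) = xor (s i) (b i)
    rw [h i hik]
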